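/- arXiv:math/0206019 — 2 statements merged into one kernel-verified Lean document; each statement's English description precedes it below -/
import Mathlib

section
/- Let 𝔱 be a compact Cartan subalgebra of 𝔰𝔩(2,ℝ) (i.e. a Cartan subalgebra on which the Killing form is negative definite, e.g. the span of the rotation generator), and let 𝔟 ⊂ 𝔰𝔩(2,ℂ) be any Borel subalgebra (2-dimensional solvable subalgebra) containing 𝔱. Then 𝔰𝔩(2,ℝ) + 𝔟 = 𝔰𝔩(2,ℂ) as real vector spaces. -/
open Matrix

attribute [local instance 100] LieRing.ofAssociativeRing

/-- Let `𝔱` be a compact Cartan subalgebra of `𝔰𝔩(2,ℝ)` (a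
1-dimensional subalgebra on which the Killing form `κ(x,y) = 4 tr(xy)` is negative
definite), and let `𝔟 ⊂ 𝔰𝔩(2,ℂ)` be a Borel subalgebra (2-dimensional solvable
complex subalgebra) containing `𝔱`.  Then `𝔰𝔩(2,ℝ) + 𝔟 = 𝔰𝔩(2,ℂ)`: every traceless
complex matrix is the sum of a traceless real matrix and an element of `𝔟`. -/
theorem sl2R_add_borel_eq_sl2C
    (𝔱 : Submodule ℝ (Matrix (Fin 2) (Fin 2) ℂ))
    (h𝔱sl2R : ∀ x ∈ 𝔱, Matrix.trace x = 0 ∧ ∀ i j, (x i j).im = 0)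
    (h𝔱cartan : Module.finrank ℝ 𝔱 = 1)
    (h𝔱compact : ∀ x ∈ 𝔱, x ≠ 0 → (Matrix.trace (x * x)).re < 0)
    (𝔟 : LieSubalgebra ℂ (Matrix (Fin 2) (Fin 2) ℂ))
    (h𝔟solv : LieAlgebra.IsSolvable 𝔟)
    (h𝔟dim : Module.finrank ℂ 𝔟 = 2)
    (h𝔟sl2C : ∀ b ∈ 𝔟, Matrix.trace b = 0)
    (h𝔱𝔟 : ∀ x ∈ 𝔱, x ∈ 𝔟) :
    ∀ m : Matrix (Fin 2) (Fin 2) ℂ, Matrix.trace m = 0 →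
      ∃ a b : Matrix (Fin 2) (Fin 2) ℂ,
        (Matrix.trace a = 0 ∧ ∀ i j, (a i j).im = 0) ∧ b ∈ 𝔟 ∧ m = a + b := by
  intro m hm
  -- pick a nonzero x in 𝔱
  obtain ⟨x, hx𝔱, hx0⟩ : ∃ x ∈ 𝔱, x ≠ 0 := by
    refine (Submodule.ne_bot_iff 𝔱).mp ?_
    intro h; rw [h] at h𝔱cartan; simp at h𝔱cartan
  obtain ⟨hxtr, hxim⟩ := h𝔱sl2R x hx𝔱
  have hx𝔟 : x ∈ 𝔟 := h𝔱𝔟 x hx𝔱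
  set a := x 0 0 with ha
  set b := x 0 1 with hb
  set c := x 1 0 with hc
  have haim : a.im = 0 := hxim 0 0
  have hbim : b.im = 0 := hxim 0 1
  have hcim : c.im = 0 := hxim 1 0
  have hx11 : x 1 1 = -a := by
    rw [Matrix.trace_fin_two] at hxtr
    linear_combination hxtr
  set k : ℂ := a * a + b * c with hk
  have hxx : x * x = k • 1 := by
    ext i j
    fin_cases i <;> fin_cases j <;>
      simp [Matrix.mul_apply, Fin.sum_univ_two, hx11, Matrix.one_apply] <;> ring
  have htr2 : Matrix.trace (x * x) = 2 * k := by
    rw [Matrix.trace_fin_two]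
    simp [Matrix.mul_apply, Fin.sum_univ_two, hx11]
    ring
  have hkre : k.re < 0 := by
    have h2 := h𝔱compact x hx𝔱 hx0
    rw [htr2] at h2
    simp [Complex.mul_re] at h2
    linarith
  have hkim : k.im = 0 := by
    simp [hk, Complex.add_im, Complex.mul_im, haim, hbim, hcim]
  have hk0 : k ≠ 0 := by
    intro h; rw [h] at hkre; simp at hkre
  have hb0 : b ≠ 0 := by
    intro h
    have : k.re = a.re * a.re := by
      rw [hk, h]
      simp [Complex.add_re, Complex.mul_re, haim]
    nlinarith
  -- pick v in 𝔟 outside the line through x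
  have hxlt : Submodule.span ℂ {x} < 𝔟.toSubmodule := by
    refine lt_of_le_of_ne ?_ ?_
    · rw [Submodule.span_le]; simpa using hx𝔟
    · intro h
      have h1 : Module.finrank ℂ (Submodule.span ℂ {x}) = 1 := finrank_span_singleton hx0
      rw [h] at h1
      rw [show Module.finrank ℂ 𝔟.toSubmodule = 2 from h𝔟dim] at h1
      norm_num at h1
  obtain ⟨v, hv𝔟, hvx⟩ := SetLike.exists_of_lt hxlt
  have hv𝔟' : v ∈ 𝔟 := hv𝔟
  -- [x,v] lies in the span of x and v
  have hbr𝔟 : x * v - v * x ∈ 𝔟 := by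
    have := 𝔟.lie_mem hx𝔟 hv𝔟'
    rwa [Ring.lie_def] at this
  obtain ⟨cf, hcf⟩ : ∃ cf : Fin 2 → ℂ,
      cf 0 • x + cf 1 • v = x * v - v * x := by
    set x' : 𝔟.toSubmodule := ⟨x, hx𝔟⟩ with hx'
    set v' : 𝔟.toSubmodule := ⟨v, hv𝔟⟩ with hv'
    have hind : LinearIndependent ℂ ![x', v'] := by
      rw [LinearIndependent.pair_iff]
      intro s t hst
      have hst' : s • x + t • v = 0 := by
        have := congrArg (Subtype.val) hst
        simpa using this
      by_cases ht : t = 0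
      · subst ht
        simp only [zero_smul, add_zero] at hst'
        rcases smul_eq_zero.mp hst' with h | h
        · exact ⟨h, rfl⟩
        · exact absurd h hx0
      · exfalso
        apply hvx
        rw [Submodule.mem_span_singleton]
        refine ⟨-s / t, ?_⟩
        have h2 : t • ((-s / t) • x) = t • v := by
          rw [smul_smul, mul_div_cancel₀ _ ht]
          rw [neg_smul]
          exact neg_eq_of_add_eq_zero_right hst'
        exact smul_right_injective _ ht h2
    have hsp : Submodule.span ℂ (Set.range ![x', v']) = ⊤ :=
      hind.span_eq_top_of_card_eq_finrank (by simpa using (show Module.finrank ℂ 𝔟.toSubmodule = 2 from h𝔟dim).symm)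
    have hmem : (⟨x * v - v * x, hbr𝔟⟩ : 𝔟.toSubmodule) ∈
        Submodule.span ℂ (Set.range ![x', v']) := by rw [hsp]; trivial
    obtain ⟨cf, hcf'⟩ := (Submodule.mem_span_range_iff_exists_fun ℂ).mp hmem
    refine ⟨cf, ?_⟩
    have := congrArg (Subtype.val) hcf'
    simpa [Fin.sum_univ_two, hx', hv'] using this
  -- the trace form kills the x-component of [x,v] against x
  have hvtr : Matrix.trace v = 0 := h𝔟sl2C v hv𝔟'
  by_cases hβ : cf 1 = 0
  · -- then [x,v] = cf 0 • x, and in fact cf 0 = 0, so v commutes with x, contradiction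
    exfalso
    rw [hβ, zero_smul, add_zero] at hcf
    have hc0 : cf 0 = 0 := by
      have h1 : Matrix.trace (x * (x * v - v * x)) = cf 0 * (2 * k) := by
        rw [← hcf, mul_smul_comm, Matrix.trace_smul, htr2, smul_eq_mul]
      have h2 : Matrix.trace (x * (x * v - v * x)) = 0 := by
        rw [mul_sub, Matrix.trace_sub, ← Matrix.mul_assoc, ← Matrix.mul_assoc,
          Matrix.trace_mul_cycle x v x, sub_self]
      have := h1.symm.trans h2
      rcases mul_eq_zero.mp this with h | h
      · exact h
      · exfalso; apply hk0
        have h4 : (2 : ℂ) ≠ 0 := by norm_num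
        rcases mul_eq_zero.mp h with h' | h'
        · exact absurd h' h4
        · exact h'
    rw [hc0, zero_smul] at hcf
    have hcomm : x * v = v * x := by
      have := hcf.symm
      rwa [sub_eq_zero] at this
    have hv11 : v 1 1 = -(v 0 0) := by
      rw [Matrix.trace_fin_two] at hvtr
      linear_combination hvtr
    have e00 := congrFun (congrFun hcomm 0) 0
    have e01 := congrFun (congrFun hcomm 0) 1
    simp [Matrix.mul_apply, Fin.sum_univ_two, hx11, hv11] at e00 e01
    apply hvx
    rw [Submodule.mem_span_singleton]
    refine ⟨v 0 1 / b, ?_⟩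
    ext i j
    fin_cases i <;> fin_cases j <;>
      simp [Matrix.smul_apply, smul_eq_mul, hx11, hv11] <;>
      simp only [← ha, ← hb, ← hc] at e00 e01 ⊢ <;> field_simp
    · linear_combination e01 / 2
    · linear_combination -e00
    · linear_combination e01 / 2
  · -- cf 1 ≠ 0 : we get a root vector e with [x,e] = lam • e
    set lam := cf 1 with hlam
    set e := cf 0 • x + lam • v with he_def
    have he𝔟 : e ∈ 𝔟 := 𝔟.add_mem (𝔟.smul_mem _ hx𝔟) (𝔟.smul_mem _ hv𝔟')
    have he0 : e ≠ 0 := by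
      intro h
      apply hvx
      rw [Submodule.mem_span_singleton]
      refine ⟨-(cf 0) / cf 1, ?_⟩
      have h2 : cf 1 • ((-(cf 0) / cf 1) • x) = cf 1 • v := by
        rw [smul_smul, mul_div_cancel₀ _ hβ, neg_smul]
        have h3 : cf 0 • x + cf 1 • v = 0 := by rw [← he_def, h]
        exact neg_eq_of_add_eq_zero_right h3
      exact smul_right_injective _ hβ h2
    have hev : x * e - e * x = lam • e := by
      have h1 : x * e - e * x = lam • (x * v - v * x) := by
        rw [he_def, mul_add, add_mul, mul_smul_comm, mul_smul_comm,
          smul_mul_assoc, smul_mul_assoc, smul_sub]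
        abel
      rw [h1, ← hcf]
    have h00 : x * (x * e) = k • e := by
      rw [← Matrix.mul_assoc, hxx, smul_mul_assoc, Matrix.one_mul]
    have h01 : e * x * x = k • e := by
      rw [Matrix.mul_assoc, hxx, mul_smul_comm, Matrix.mul_one]
    -- x * e = (lam/2) • e
    have hA : x * (x * e - e * x) - (x * e - e * x) * x = (lam * lam) • e := by
      rw [hev, mul_smul_comm, smul_mul_assoc, ← smul_sub, hev, smul_smul]
    have hB : x * (x * e - e * x) - (x * e - e * x) * x
        = (2 * k) • e - (2 : ℂ) • (x * e * x) := by
      have hexp : x * (x * e - e * x) - (x * e - e * x) * x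
          = x * (x * e) + e * x * x - (x * (e * x) + x * e * x) := by
        noncomm_ring
      rw [hexp, h00, h01, ← Matrix.mul_assoc]
      module
    have hC : (2 * k) • e - (2 : ℂ) • (x * e * x) = (lam * lam) • e := hB.symm.trans hA
    have hD : k • e - x * e * x = lam • (x * e) := by
      have h1 := congrArg (fun y => x * y) hev
      simp only [mul_sub, mul_smul_comm] at h1
      rw [h00, ← Matrix.mul_assoc] at h1
      exact h1
    have hD' : x * e * x = k • e - lam • (x * e) := by
      rw [sub_eq_iff_eq_add] at hD
      rw [hD, add_sub_cancel_left]
    have hE : (2 * lam) • (x * e) = (lam * lam) • e := by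
      rw [hD'] at hC
      have h1 : (2 * lam) • (x * e) =
          (2 * k) • e - (2 : ℂ) • (k • e - lam • (x * e)) := by module
      rw [h1, hC]
    have hxe : x * e = (lam / 2) • e := by
      have h2 : (2 * lam) • (x * e - (lam / 2) • e) = 0 := by
        rw [smul_sub, hE, smul_smul, show 2 * lam * (lam / 2) = lam * lam by ring, sub_self]
      rcases smul_eq_zero.mp h2 with h | h
      · exfalso; rcases mul_eq_zero.mp h with h' | h'
        · norm_num at h'
        · exact hβ h'
      · exact sub_eq_zero.mp h
    have hk4 : lam * lam = 4 * k := by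
      have h1 : x * (x * e) = (lam / 2 * (lam / 2)) • e := by
        rw [hxe, mul_smul_comm, hxe, smul_smul]
      have h2 : (lam / 2 * (lam / 2) - k) • e = 0 := by
        rw [sub_smul, ← h1, h00, sub_self]
      rcases smul_eq_zero.mp h2 with h | h
      · have : lam / 2 * (lam / 2) = k := by rwa [sub_eq_zero] at h
        linear_combination 4 * this
      · exact absurd h he0
    have hex : e * x = (-(lam / 2)) • e := by
      rw [hxe] at hev
      rw [sub_eq_iff_eq_add] at hev
      have h1 : e * x = (lam / 2) • e - lam • e := by
        rw [hev, add_comm, add_sub_cancel_right]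
      rw [h1, ← sub_smul]
      congr 1
      ring
    have hlamre : lam.re = 0 := by
      have h1 : (lam * lam).im = 0 := by
        rw [hk4]; simp [Complex.mul_im, hkim]
      have h2 : (lam * lam).re < 0 := by
        rw [hk4]; simp [Complex.mul_re, hkim]; linarith
      simp [Complex.mul_im] at h1
      simp [Complex.mul_re] at h2
      rcases mul_eq_zero.mp (by linarith : lam.re * lam.im = 0) with h | h
      · exact h
      · exfalso; rw [h] at h2; nlinarith
    have hclam : (starRingEnd ℂ) lam = -lam := by
      apply Complex.ext <;> simp [hlamre]
    have hcx : ∀ i j, (starRingEnd ℂ) (x i j) = x i j :=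
      fun i j => Complex.conj_eq_iff_im.mpr (hxim i j)
    set eb : Matrix (Fin 2) (Fin 2) ℂ :=
      Matrix.of fun i j => (starRingEnd ℂ) (e i j) with heb_def
    have hebapp : ∀ i j, eb i j = (starRingEnd ℂ) (e i j) := fun i j => rfl
    have heb0 : eb ≠ 0 := by
      intro h
      apply he0
      ext i j
      have h1 := congrFun (congrFun h i) j
      rw [hebapp] at h1
      simp only [Matrix.zero_apply, map_eq_zero] at h1
      simpa using h1
    have hclam2 : (starRingEnd ℂ) (lam / 2) = -(lam / 2) := by
      rw [map_div₀, hclam, Complex.conj_ofNat 2]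
      ring
    have hxeb : x * eb = (-(lam / 2)) • eb := by
      ext i j
      have h1 := congrFun (congrFun hxe i) j
      simp only [Matrix.mul_apply, Fin.sum_univ_two, Matrix.smul_apply, smul_eq_mul] at h1 ⊢
      rw [hebapp, hebapp, hebapp]
      calc x i 0 * (starRingEnd ℂ) (e 0 j) + x i 1 * (starRingEnd ℂ) (e 1 j)
          = (starRingEnd ℂ) (x i 0 * e 0 j + x i 1 * e 1 j) := by
            rw [_root_.map_add, _root_.map_mul, _root_.map_mul, hcx, hcx]
        _ = (starRingEnd ℂ) (lam / 2 * e i j) := by rw [h1]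
        _ = -(lam / 2) * (starRingEnd ℂ) (e i j) := by rw [_root_.map_mul, hclam2]
    have hebx : eb * x = (lam / 2) • eb := by
      ext i j
      have h1 := congrFun (congrFun hex i) j
      simp only [Matrix.mul_apply, Fin.sum_univ_two, Matrix.smul_apply, smul_eq_mul] at h1 ⊢
      rw [hebapp, hebapp, hebapp]
      calc (starRingEnd ℂ) (e i 0) * x 0 j + (starRingEnd ℂ) (e i 1) * x 1 j
          = (starRingEnd ℂ) (e i 0 * x 0 j + e i 1 * x 1 j) := by
            rw [_root_.map_add, _root_.map_mul, _root_.map_mul, hcx, hcx]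
        _ = (starRingEnd ℂ) (-(lam / 2) * e i j) := by rw [h1]
        _ = lam / 2 * (starRingEnd ℂ) (e i j) := by
            rw [_root_.map_mul, map_neg, hclam2]; ring
    have hebv : x * eb - eb * x = (-lam) • eb := by
      rw [hxeb, hebx, ← sub_smul]
      congr 1
      ring
    have htre : Matrix.trace e = 0 := h𝔟sl2C e he𝔟
    have htreb : Matrix.trace eb = 0 := by
      rw [Matrix.trace_fin_two] at htre ⊢
      rw [hebapp, hebapp, ← map_add, htre, map_zero]
    -- the family x, e, eb, 1 is linearly independent, hence spans
    have hli : LinearIndependent ℂ ![x, e, eb, (1 : Matrix (Fin 2) (Fin 2) ℂ)] := by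
      rw [Fintype.linearIndependent_iff]
      intro g hg
      rw [Fin.sum_univ_four] at hg
      simp only [Matrix.cons_val_zero, Matrix.cons_val_one, Matrix.head_cons,
        Matrix.cons_val_two, Matrix.tail_cons, Matrix.cons_val_three, Matrix.head_fin_const] at hg
      -- hg : g 0 • x + g 1 • e + g 2 • eb + g 3 • 1 = 0
      have hA1 : lam • (g 1 • e) - lam • (g 2 • eb) = 0 := by
        have hexp : x * (g 0 • x + g 1 • e + g 2 • eb + g 3 • 1)
            - (g 0 • x + g 1 • e + g 2 • eb + g 3 • 1) * x
            = lam • (g 1 • e) - lam • (g 2 • eb) := by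
          rw [mul_add, mul_add, mul_add, add_mul, add_mul, add_mul,
            mul_smul_comm, mul_smul_comm, mul_smul_comm, mul_smul_comm,
            smul_mul_assoc, smul_mul_assoc, smul_mul_assoc, smul_mul_assoc,
            hxe, hex, hxeb, hebx, Matrix.mul_one, Matrix.one_mul]
          module
        rw [hg, mul_zero, zero_mul, sub_zero] at hexp
        exact hexp.symm
      have hA' : g 1 • e = g 2 • eb := by
        rw [← smul_sub] at hA1
        rcases smul_eq_zero.mp hA1 with h | h
        · exact absurd h hβ
        · exact sub_eq_zero.mp h
      have hB1 : g 1 • (lam • e) = g 2 • ((-lam) • eb) := by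
        calc g 1 • (lam • e) = x * (g 1 • e) - (g 1 • e) * x := by
              rw [mul_smul_comm, smul_mul_assoc, ← smul_sub, hev]
          _ = x * (g 2 • eb) - (g 2 • eb) * x := by rw [hA']
          _ = g 2 • ((-lam) • eb) := by
              rw [mul_smul_comm, smul_mul_assoc, ← smul_sub, hebv]
      have hg2 : g 2 = 0 := by
        have h1 : (g 2 * lam) • eb = (-(g 2 * lam)) • eb := by
          calc (g 2 * lam) • eb = lam • (g 2 • eb) := by
                rw [smul_smul, mul_comm]
            _ = lam • (g 1 • e) := by rw [hA']
            _ = g 1 • (lam • e) := by rw [smul_comm]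
            _ = g 2 • ((-lam) • eb) := hB1
            _ = (-(g 2 * lam)) • eb := by rw [smul_smul]; congr 1; ring
        have h2 : (2 * (g 2 * lam)) • eb = 0 := by
          have h3 := sub_eq_zero_of_eq h1
          rw [← sub_smul, show g 2 * lam - -(g 2 * lam) = 2 * (g 2 * lam) by ring] at h3
          exact h3
        rcases smul_eq_zero.mp h2 with h | h
        · rcases mul_eq_zero.mp h with h' | h'
          · norm_num at h'
          · rcases mul_eq_zero.mp h' with h'' | h''
            · exact h''
            · exact absurd h'' hβ
        · exact absurd h heb0
      have hg1 : g 1 = 0 := by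
        rw [hg2, zero_smul] at hA'
        rcases smul_eq_zero.mp hA' with h | h
        · exact h
        · exact absurd h he0
      have hg0 : g 0 = 0 := by
        rw [hg1, hg2, zero_smul, zero_smul, add_zero, add_zero] at hg
        have h1 := congrFun (congrFun hg 0) 1
        simp only [Matrix.add_apply, Matrix.smul_apply, Matrix.one_apply,
          Matrix.zero_apply, smul_eq_mul] at h1
        norm_num at h1
        rcases h1 with h | h
        · exact h
        · exact absurd h hb0
      have hg3 : g 3 = 0 := by
        rw [hg0, hg1, hg2, zero_smul, zero_smul, zero_smul, zero_add, zero_add,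
          zero_add] at hg
        have h1 := congrFun (congrFun hg 0) 0
        simp only [Matrix.smul_apply, Matrix.one_apply, Matrix.zero_apply,
          smul_eq_mul] at h1
        norm_num at h1
        exact h1
      intro i
      fin_cases i <;> assumption
    have hcard : Fintype.card (Fin 4) = Module.finrank ℂ (Matrix (Fin 2) (Fin 2) ℂ) := by
      simp [Module.finrank_matrix]
    have hsp := hli.span_eq_top_of_card_eq_finrank hcard
    have hmem : m ∈ Submodule.span ℂ
        (Set.range ![x, e, eb, (1 : Matrix (Fin 2) (Fin 2) ℂ)]) := by
      rw [hsp]; trivial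
    obtain ⟨g, hgm⟩ := (Submodule.mem_span_range_iff_exists_fun ℂ).mp hmem
    rw [Fin.sum_univ_four] at hgm
    simp only [Matrix.cons_val_zero, Matrix.cons_val_one, Matrix.head_cons,
      Matrix.cons_val_two, Matrix.tail_cons, Matrix.cons_val_three, Matrix.head_fin_const] at hgm
    -- hgm : g 0 • x + g 1 • e + g 2 • eb + g 3 • 1 = m
    have hg3 : g 3 = 0 := by
      have h1 := congrArg Matrix.trace hgm
      rw [hm] at h1
      rw [Matrix.trace_add, Matrix.trace_add, Matrix.trace_add,
        Matrix.trace_smul, Matrix.trace_smul, Matrix.trace_smul, Matrix.trace_smul,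
        hxtr, htre, htreb, Matrix.trace_one] at h1
      simp at h1
      exact h1
    refine ⟨g 2 • eb + ((starRingEnd ℂ) (g 2)) • e,
      g 0 • x + (g 1 - (starRingEnd ℂ) (g 2)) • e, ⟨?_, ?_⟩, ?_, ?_⟩
    · rw [Matrix.trace_add, Matrix.trace_smul, Matrix.trace_smul, htre, htreb]
      simp
    · intro i j
      simp only [Matrix.add_apply, Matrix.smul_apply, smul_eq_mul]
      rw [hebapp]
      have h1 : g 2 * (starRingEnd ℂ) (e i j)
          = (starRingEnd ℂ) ((starRingEnd ℂ) (g 2) * e i j) := by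
        rw [_root_.map_mul, Complex.conj_conj]
      rw [h1]
      simp [Complex.add_im]
      ring
    · exact 𝔟.add_mem (𝔟.smul_mem _ hx𝔟) (𝔟.smul_mem _ he𝔟)
    · rw [← hgm, hg3, zero_smul, add_zero]
      module
end

section
/- Let K ⊂ ℝᵐ × ℝᵈ be a set of points (s, ζ) such that ζ = ζ̃ − s·v where ζ̃ ranges over a closed set A ⊂ ℝᵈ, v ∈ ℝᵈ is a fixed unit vector, s ≥ 0, and the angle between every ζ̃ ∈ A \ {0} and v is at least α ∈ (0, π/2). If moreover ‖ζ‖ ≤ R, then s ≤ R/sin(α). -/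
open InnerProductGeometry Real RealInnerProductSpace

/-- if `ζ = ζ̃ − s•v` with `ζ̃` in a closed set `A`, `v` a unit vector,
`s ≥ 0`, every nonzero `ζ̃ ∈ A` making angle at least `α ∈ (0, π/2)` with `v`, and
`‖ζ‖ ≤ R`, then `s ≤ R / sin α`. -/
theorem parameter_bound_from_angle {d : ℕ} (A : Set (EuclideanSpace ℝ (Fin d)))
    (hA : IsClosed A) (v : EuclideanSpace ℝ (Fin d)) (hv : ‖v‖ = 1)
    (α : ℝ) (hα0 : 0 < α) (hα1 : α < π / 2)
    (hangle : ∀ ζ' ∈ A, ζ' ≠ 0 → α ≤ InnerProductGeometry.angle ζ' v)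
    (s : ℝ) (hs : 0 ≤ s) (ζ' : EuclideanSpace ℝ (Fin d)) (hζ'A : ζ' ∈ A)
    (ζ : EuclideanSpace ℝ (Fin d)) (hζ : ζ = ζ' - s • v)
    (R : ℝ) (hR : ‖ζ‖ ≤ R) :
    s ≤ R / Real.sin α := by
  have hsin : 0 < Real.sin α := Real.sin_pos_of_pos_of_lt_pi hα0
    (lt_trans hα1 (by linarith [Real.pi_pos]))
  have hsin1 : Real.sin α ≤ 1 := Real.sin_le_one α
  -- key: s * sin α ≤ ‖ζ‖
  have key : s * Real.sin α ≤ ‖ζ‖ := by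
    by_cases hz : ζ' = 0
    · subst hζ; subst hz
      simp only [zero_sub, norm_neg, norm_smul, hv, mul_one, Real.norm_eq_abs,
        abs_of_nonneg hs]
      nlinarith
    · have hang : α ≤ InnerProductGeometry.angle ζ' v := hangle ζ' hζ'A hz
      have hcos : Real.cos (InnerProductGeometry.angle ζ' v) ≤ Real.cos α :=
        Real.cos_le_cos_of_nonneg_of_le_pi hα0.le (InnerProductGeometry.angle_le_pi _ _) hang
      have hinner : (@inner ℝ _ _ ζ' v) ≤ ‖ζ'‖ * Real.cos α := by
        have := InnerProductGeometry.cos_angle_mul_norm_mul_norm ζ' v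
        rw [hv, mul_one] at this
        nlinarith [norm_nonneg ζ', Real.cos_le_one α,
          mul_le_mul_of_nonneg_left hcos (norm_nonneg ζ')]
      have hexp : ‖ζ‖ ^ 2 = ‖ζ'‖ ^ 2 - 2 * s * (@inner ℝ _ _ ζ' v) + s ^ 2 := by
        rw [hζ]
        have := @norm_sub_sq_real (EuclideanSpace ℝ (Fin d)) _ _ ζ' (s • v)
        rw [norm_smul, hv, real_inner_smul_right] at this
        rw [this, Real.norm_eq_abs]
        ring_nf
        rw [sq_abs]
      have hpyth : Real.sin α ^ 2 + Real.cos α ^ 2 = 1 := by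
        rw [add_comm]; exact Real.cos_sq_add_sin_sq α
      have h2 : (s * Real.sin α) ^ 2 ≤ ‖ζ‖ ^ 2 := by
        have h3 : ‖ζ‖ ^ 2 ≥ (‖ζ'‖ - s * Real.cos α) ^ 2 + s ^ 2 * Real.sin α ^ 2 := by
          rw [hexp]
          nlinarith [mul_le_mul_of_nonneg_left hinner (by linarith : (0:ℝ) ≤ 2 * s)]
        nlinarith [sq_nonneg (‖ζ'‖ - s * Real.cos α)]
      nlinarith [norm_nonneg ζ, mul_nonneg hs hsin.le, h2]
  rw [le_div_iff₀ hsin]; linarith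
end
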